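/- Let k be a field, g a finite-dimensional Lie algebra over k with basis {X_i} and dual basis {f^i} of g*. Let V be a right g-module and simultaneously a left g-comodule via a linear map ∇ : V → g ⊗ V, ∇(v) = v₍₋₁₎ ⊗ v₍₀₎, satisfying v₍₋₂₎ ∧ v₍₋₁₎ ⊗ v₍₀₎ = 0; write v·f := f(v₍₋₁₎)•v₍₀₎ for f ∈ g*. For n ≥ 0 let W^n(g,V) be the space of alternating k-multilinear maps g^n → V, with the Chevalley–Eilenberg coboundary d_CE(α)(Y_0,…,Y_n) = Σ_{i<j} (−1)^{i+j} α([Y_i,Y_j],Y_0,…,Ŷ_i,…,Ŷ_j,…,Y_n) + Σ_{j=0}^{n} (−1)^{j+1} α(Y_0,…,Ŷ_j,…,Y_n)·Y_j, and the Koszul boundary d_K(β)(Y_1,…,Y_n) = Σ_i β(X_i,Y_1,…,Y_n)·f^i. Then d_CE ∘ d_K + d_K ∘ d_CE = 0 on W^n(g,V) for all n ≥ 0 if and only if V is a unimodular stable anti-Yetter–Drinfeld module over g, i.e. if and only if both (i) Σ_i (v·X_i)·f^i = 0 for all v ∈ V (unimodular stability), and (ii) ∇(v·X) = v₍₋₁₎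 ⊗ (v₍₀₎·X) + [v₍₋₁₎, X] ⊗ v₍₀₎ for all v ∈ V and X ∈ g (the anti-Yetter–Drinfeld condition). -/

import Mathlib

open TensorProduct

/-- The map flipping the first two tensor factors of `g ⊗ (g ⊗ V)`. -/
noncomputable def flip12 (k : Type*) [Field k] (g V : Type*)
    [AddCommGroup g] [Module k g] [AddCommGroup V] [Module k V] :
    (g ⊗[k] (g ⊗[k] V)) ≃ₗ[k] (g ⊗[k] (g ⊗[k] V)) :=
  (TensorProduct.assoc k g g V).symm ≪≫ₗ
    (TensorProduct.congr (TensorProduct.comm k g g) (LinearEquiv.refl k V)) ≪≫ₗ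
      (TensorProduct.assoc k g g V)

/-- The action `v ↦ v·f = f(v₍₋₁₎) • v₍₀₎` associated to a coaction `cov : V → g ⊗ V`
and a functional `f ∈ g*`. -/
noncomputable def coactL (k : Type*) [Field k] (g V : Type*)
    [AddCommGroup g] [Module k g] [AddCommGroup V] [Module k V]
    (cov : V →ₗ[k] g ⊗[k] V) (f : Module.Dual k g) : V →ₗ[k] V :=
  (TensorProduct.lid k V).toLinearMap ∘ₗ (TensorProduct.map f LinearMap.id) ∘ₗ cov

section CE

variable (k : Type*) [Field k] (g : Type*) [LieRing g] [LieAlgebra k g]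
  (V : Type*) [AddCommGroup V] [Module k V]

/-- The Chevalley–Eilenberg coboundary
`d_CE(α)(Y_0,…,Y_n) = Σ_{i<j} (−1)^{i+j} α([Y_i,Y_j],Y_0,…,Ŷ_i,…,Ŷ_j,…,Y_n)
  + Σ_j (−1)^{j+1} α(Y_0,…,Ŷ_j,…,Y_n)·Y_j`,
written as an operator on arbitrary `V`-valued cochains (here `a` is the right
`g`-action on `V`). -/
noncomputable def dCE (a : V →ₗ[k] g →ₗ[k] V) (n : ℕ)
    (γ : (Fin n → g) → V) : (Fin (n + 1) → g) → V :=
  fun Y =>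
    (∑ i : Fin (n + 1), ∑ j : Fin (n + 1),
      if h : (i : ℕ) < (j : ℕ) then
        ((-1 : ℤ) ^ ((i : ℕ) + (j : ℕ))) •
          γ (fun p : Fin n =>
            (Fin.cons ⁅Y i, Y j⁆
              (Fin.removeNth
                (⟨(i : ℕ), by have := j.isLt; omega⟩ : Fin (n - 1 + 1))
                (fun q : Fin (n - 1 + 1) =>
                  Fin.removeNth j Y (Fin.cast (by have := j.isLt; omega) q)))
              : Fin (n - 1 + 1) → g)
              (Fin.cast (by have := j.isLt; omega) p))
      else 0)
    + ∑ j : Fin (n + 1), ((-1 : ℤ) ^ ((j : ℕ) + 1)) • a (γ (Fin.removeNth j Y)) (Y j)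

/-- The Koszul boundary `d_K(β)(Y_1,…,Y_n) = Σ_i β(X_i, Y_1,…,Y_n)·f^i`, written as an
operator on arbitrary `V`-valued cochains; here `b` is a basis of `g` (with dual basis
`b.coord`) and `cov` is the `g`-coaction on `V`. -/
noncomputable def dK {ι : Type*} [Fintype ι] (b : Module.Basis ι k g)
    (cov : V →ₗ[k] g ⊗[k] V) (n : ℕ)
    (γ : (Fin (n + 1) → g) → V) : (Fin n → g) → V :=
  fun Y => ∑ i : ι, coactL k g V cov (b.coord i) (γ (Fin.cons (b i) Y))

end CE

set_option linter.unusedSectionVars false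
section Aux

variable (k : Type*) [Field k]
    (g : Type*) [LieRing g] [LieAlgebra k g]
    (ι : Type*) [Fintype ι] [DecidableEq ι] (b : Module.Basis ι k g)
    (V : Type*) [AddCommGroup V] [Module k V]
    (cov : V →ₗ[k] g ⊗[k] V)
    (a : V →ₗ[k] g →ₗ[k] V)

/-- Component extraction `f ⊗ id` followed by `lid`. -/
noncomputable def comp' (f : Module.Dual k g) : g ⊗[k] V →ₗ[k] V :=
  (TensorProduct.lid k V).toLinearMap ∘ₗ (TensorProduct.map f LinearMap.id)

lemma coactL_eq (f : Module.Dual k g) (v : V) :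
    coactL k g V cov f v = comp' k g V f (cov v) := rfl

lemma comp'_tmul (f : Module.Dual k g) (u : g) (m : V) :
    comp' k g V f (u ⊗ₜ[k] m) = f u • m := rfl

/-- `f ↦ comp' f t` as a linear map. -/
noncomputable def compAt (t : g ⊗[k] V) : Module.Dual k g →ₗ[k] V where
  toFun f := comp' k g V f t
  map_add' f₁ f₂ := by
    induction t using TensorProduct.induction_on with
    | zero => simp
    | tmul u m => simp [comp'_tmul, add_smul]
    | add x y hx hy => simp_all [map_add]; abel
  map_smul' c f := by
    induction t using TensorProduct.induction_on with
    | zero => simp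
    | tmul u m => simp [comp'_tmul, smul_smul]
    | add x y hx hy => simp_all [map_add]

lemma compAt_apply (t : g ⊗[k] V) (f : Module.Dual k g) :
    compAt k g V t f = comp' k g V f t := rfl

lemma recon (t : g ⊗[k] V) :
    ∑ i, (b i) ⊗ₜ[k] (comp' k g V (b.coord i) t) = t := by
  induction t using TensorProduct.induction_on with
  | zero => simp
  | tmul u m =>
      have h1 : ∀ i, (b i) ⊗ₜ[k] (comp' k g V (b.coord i) (u ⊗ₜ[k] m))
          = (b.repr u i • b i) ⊗ₜ[k] m := by
        intro i
        rw [comp'_tmul, TensorProduct.tmul_smul, TensorProduct.smul_tmul',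
          Module.Basis.coord_apply]
      rw [Finset.sum_congr rfl (fun i _ => h1 i), ← TensorProduct.sum_tmul,
        Module.Basis.sum_repr]
  | add x y hx hy =>
      simp only [map_add, TensorProduct.tmul_add]
      rw [Finset.sum_add_distrib, hx, hy]

lemma comp'_lTensor (f : Module.Dual k g) (φ : V →ₗ[k] V) (t : g ⊗[k] V) :
    comp' k g V f (LinearMap.lTensor g φ t) = φ (comp' k g V f t) := by
  induction t using TensorProduct.induction_on with
  | zero => simp
  | tmul u m => simp [comp'_tmul, LinearMap.lTensor_tmul]
  | add x y hx hy => simp_all [map_add]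

lemma comp'_rTensor (f : Module.Dual k g) (ψ : g →ₗ[k] g) (t : g ⊗[k] V) :
    comp' k g V f (LinearMap.rTensor V ψ t) = comp' k g V (f ∘ₗ ψ) t := by
  induction t using TensorProduct.induction_on with
  | zero => simp
  | tmul u m => simp [comp'_tmul, LinearMap.rTensor_tmul]
  | add x y hx hy => simp_all [map_add]

end Aux
section Key
set_option linter.unusedSectionVars false

variable (k : Type*) [Field k]
    (g : Type*) [LieRing g] [LieAlgebra k g]
    (ι : Type*) [Fintype ι] [DecidableEq ι] (b : Module.Basis ι k g)
    (V : Type*) [AddCommGroup V] [Module k V]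
    (cov : V →ₗ[k] g ⊗[k] V)
    (a : V →ₗ[k] g →ₗ[k] V)

lemma dual_ad (φ : Module.Dual k g) (X u : g) :
    (φ ∘ₗ (-(LieAlgebra.ad k g X) : g →ₗ[k] g)) u = φ ⁅u, X⁆ := by
  simp only [LinearMap.comp_apply, LinearMap.neg_apply, LieAlgebra.ad_apply, map_neg]
  rw [← map_neg, lie_skew]

lemma sum_coord_smul (φ : Module.Dual k g) (u : V) :
    ∑ i, φ (b i) • coactL k g V cov (b.coord i) u = coactL k g V cov φ u := by
  have h : ∀ i : ι, φ (b i) • coactL k g V cov (b.coord i) u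
      = compAt k g V (cov u) (φ (b i) • b.coord i) := fun i => by rw [map_smul]; rfl
  rw [Finset.sum_congr rfl fun i _ => h i, ← map_sum, Module.Basis.sum_dual_apply_smul_coord]
  rfl

lemma swap_sum (w : g →ₗ[k] V) (X : g) :
    ∑ i, coactL k g V cov (b.coord i) (w ⁅b i, X⁆)
      = ∑ i, coactL k g V cov
          (b.coord i ∘ₗ (-(LieAlgebra.ad k g X) : g →ₗ[k] g)) (w (b i)) := by
  have expand : ∀ i : ι, w ⁅b i, X⁆ = ∑ j, b.coord j ⁅b i, X⁆ • w (b j) := by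
    intro i
    conv_lhs => rw [← Module.Basis.sum_repr b ⁅b i, X⁆, map_sum]
    exact Finset.sum_congr rfl fun j _ => by rw [map_smul, Module.Basis.coord_apply]
  calc ∑ i, coactL k g V cov (b.coord i) (w ⁅b i, X⁆)
      = ∑ i, ∑ j, b.coord j ⁅b i, X⁆ • coactL k g V cov (b.coord i) (w (b j)) := by
        refine Finset.sum_congr rfl fun i _ => ?_
        rw [expand i, map_sum]
        exact Finset.sum_congr rfl fun j _ => by rw [map_smul]
    _ = ∑ j, ∑ i, b.coord j ⁅b i, X⁆ • coactL k g V cov (b.coord i) (w (b j)) :=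
        Finset.sum_comm
    _ = ∑ j, coactL k g V cov
          (b.coord j ∘ₗ (-(LieAlgebra.ad k g X) : g →ₗ[k] g)) (w (b j)) := by
        refine Finset.sum_congr rfl fun j _ => ?_
        rw [Finset.sum_congr rfl fun i (_ : i ∈ Finset.univ) => by
          rw [← dual_ad k g (b.coord j) X (b i)]]
        exact sum_coord_smul k g ι b V cov _ _

lemma KEY_of_AYD
    (hAYD : ∀ (v : V) (X : g),
      cov (a v X) = (LinearMap.lTensor g (a.flip X)) (cov v)
        + (LinearMap.rTensor V (-(LieAlgebra.ad k g X))) (cov v))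
    (w : g →ₗ[k] V) (X : g) :
    ∑ i, coactL k g V cov (b.coord i) (a (w (b i)) X)
      = a (∑ i, coactL k g V cov (b.coord i) (w (b i))) X
        + ∑ i, coactL k g V cov (b.coord i) (w ⁅b i, X⁆) := by
  have comp : ∀ (v : V) (i : ι), coactL k g V cov (b.coord i) (a v X)
      = a (coactL k g V cov (b.coord i) v) X
        + coactL k g V cov (b.coord i ∘ₗ (-(LieAlgebra.ad k g X) : g →ₗ[k] g)) v := by
    intro v i
    rw [coactL_eq, hAYD v X, map_add, comp'_lTensor, comp'_rTensor]
    rfl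
  rw [Finset.sum_congr rfl fun i _ => comp (w (b i)) i, Finset.sum_add_distrib,
    swap_sum k g ι b V cov w X]
  congr 1
  exact (map_sum (a.flip X) (fun i => coactL k g V cov (b.coord i) (w (b i)))
    Finset.univ).symm

lemma AYD_of_KEY
    (hKEY : ∀ (w : g →ₗ[k] V) (X : g),
      ∑ i, coactL k g V cov (b.coord i) (a (w (b i)) X)
        = a (∑ i, coactL k g V cov (b.coord i) (w (b i))) X
          + ∑ i, coactL k g V cov (b.coord i) (w ⁅b i, X⁆))
    (v : V) (X : g) :
    cov (a v X) = (LinearMap.lTensor g (a.flip X)) (cov v)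
      + (LinearMap.rTensor V (-(LieAlgebra.ad k g X))) (cov v) := by
  have comp : ∀ j : ι, coactL k g V cov (b.coord j) (a v X)
      = a (coactL k g V cov (b.coord j) v) X
        + coactL k g V cov (b.coord j ∘ₗ (-(LieAlgebra.ad k g X) : g →ₗ[k] g)) v := by
    intro j
    have h := hKEY ((b.coord j).smulRight v) X
    have e1 : ∀ i : ι, ((b.coord j).smulRight v) (b i) = b.coord j (b i) • v :=
      fun i => rfl
    have s1 : ∑ i, coactL k g V cov (b.coord i) (a (((b.coord j).smulRight v) (b i)) X)
        = coactL k g V cov (b.coord j) (a v X) := by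
      rw [Finset.sum_congr rfl fun i _ => by
        rw [e1 i, map_smul, LinearMap.smul_apply, map_smul]]
      exact sum_coord_smul k g ι b V cov _ _
    have s2 : ∑ i, coactL k g V cov (b.coord i) (((b.coord j).smulRight v) (b i))
        = coactL k g V cov (b.coord j) v := by
      rw [Finset.sum_congr rfl fun i _ => by rw [e1 i, map_smul]]
      exact sum_coord_smul k g ι b V cov _ _
    have s3 : ∑ i, coactL k g V cov (b.coord i) (((b.coord j).smulRight v) ⁅b i, X⁆)
        = coactL k g V cov (b.coord j ∘ₗ (-(LieAlgebra.ad k g X) : g →ₗ[k] g)) v := by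
      have e2 : ∀ i : ι, ((b.coord j).smulRight v) ⁅b i, X⁆
          = (b.coord j ∘ₗ (-(LieAlgebra.ad k g X) : g →ₗ[k] g)) (b i) • v := by
        intro i; rw [dual_ad]; rfl
      rw [Finset.sum_congr rfl fun i _ => by rw [e2 i, map_smul]]
      exact sum_coord_smul k g ι b V cov _ _
    rw [s1, s2, s3] at h
    exact h
  calc cov (a v X)
      = ∑ j, (b j) ⊗ₜ[k] (comp' k g V (b.coord j) (cov (a v X))) :=
        (recon k g ι b V _).symm
    _ = ∑ j, (b j) ⊗ₜ[k] (comp' k g V (b.coord j)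
          ((LinearMap.lTensor g (a.flip X)) (cov v)
            + (LinearMap.rTensor V (-(LieAlgebra.ad k g X))) (cov v))) := by
        refine Finset.sum_congr rfl fun j _ => ?_
        congr 1
        rw [map_add, comp'_lTensor, comp'_rTensor]
        exact comp j
    _ = _ := recon k g ι b V _

end Key
section FinAux
set_option linter.unusedSectionVars false

variable (k : Type*) [Field k]
    (g : Type*) [LieRing g] [LieAlgebra k g]
    (V : Type*) [AddCommGroup V] [Module k V]
    (a : V →ₗ[k] g →ₗ[k] V)

/-- The tuple fed to `γ` in the pair part of `dCE`. -/
def Atup (n : ℕ) (Y : Fin (n + 1) → g) (i j : Fin (n + 1))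
    (h : (i : ℕ) < (j : ℕ)) : Fin n → g :=
  fun p : Fin n =>
    (Fin.cons ⁅Y i, Y j⁆
      (Fin.removeNth
        (⟨(i : ℕ), by have := j.isLt; omega⟩ : Fin (n - 1 + 1))
        (fun q : Fin (n - 1 + 1) =>
          Fin.removeNth j Y (Fin.cast (by have := j.isLt; omega) q)))
      : Fin (n - 1 + 1) → g)
      (Fin.cast (by have := j.isLt; omega) p)

lemma dCE_eq (n : ℕ) (γ : (Fin n → g) → V) (Y : Fin (n + 1) → g) :
    dCE k g V a n γ Y
      = (∑ i : Fin (n + 1), ∑ j : Fin (n + 1),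
          if h : (i : ℕ) < (j : ℕ) then
            ((-1 : ℤ) ^ ((i : ℕ) + (j : ℕ))) • γ (Atup g n Y i j h)
          else 0)
        + ∑ j : Fin (n + 1), ((-1 : ℤ) ^ ((j : ℕ) + 1)) •
            a (γ (Fin.removeNth j Y)) (Y j) := rfl

lemma Atup_succ (n : ℕ) (Y : Fin (n + 2) → g) (i j : Fin (n + 2))
    (h : (i : ℕ) < (j : ℕ)) :
    Atup g (n + 1) Y i j h
      = Fin.cons ⁅Y i, Y j⁆
          (Fin.removeNth (⟨(i : ℕ), by have := j.isLt; omega⟩ : Fin (n + 1))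
            (Fin.removeNth j Y)) := rfl

lemma removeNth_succ_cons {n : ℕ} (r : Fin (n + 1)) (x : g) (Y : Fin (n + 1) → g) :
    Fin.removeNth r.succ (Fin.cons x Y : Fin (n + 2) → g)
      = (Fin.cons x (Fin.removeNth r Y) : Fin (n + 1) → g) := by
  funext p
  induction p using Fin.cases with
  | zero =>
      show (Fin.cons x Y : Fin (n + 2) → g) (r.succ.succAbove 0)
        = (Fin.cons x (Fin.removeNth r Y) : Fin (n + 1) → g) 0
      rw [Fin.succ_succAbove_zero, Fin.cons_zero, Fin.cons_zero]
  | succ s =>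
      show (Fin.cons x Y : Fin (n + 2) → g) (r.succ.succAbove s.succ)
        = (Fin.cons x (Fin.removeNth r Y) : Fin (n + 1) → g) s.succ
      rw [Fin.succ_succAbove_succ, Fin.cons_succ, Fin.cons_succ]
      rfl

lemma cons_cons_swap {n : ℕ} (x y : g) (D : Fin n → g) :
    (Fin.cons x (Fin.cons y D) : Fin (n + 2) → g) ∘ (Equiv.swap 0 1)
      = Fin.cons y (Fin.cons x D) := by
  funext p
  show (Fin.cons x (Fin.cons y D) : Fin (n + 2) → g) (Equiv.swap 0 1 p)
    = (Fin.cons y (Fin.cons x D) : Fin (n + 2) → g) p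
  induction p using Fin.cases with
  | zero =>
      rw [Equiv.swap_apply_left]
      show (Fin.cons x (Fin.cons y D) : Fin (n + 2) → g) (Fin.succ 0) = y
      rw [Fin.cons_succ, Fin.cons_zero]
  | succ s =>
      induction s using Fin.cases with
      | zero =>
          have h1 : (Fin.succ 0 : Fin (n + 2)) = 1 := rfl
          rw [h1, Equiv.swap_apply_right, Fin.cons_zero, ← h1, Fin.cons_succ,
            Fin.cons_zero]
      | succ r =>
          have h1 : (r.succ.succ : Fin (n + 2)) ≠ 0 := Fin.succ_ne_zero _
          have h2 : (r.succ.succ : Fin (n + 2)) ≠ 1 := by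
            simp [Fin.ext_iff]
          rw [Equiv.swap_apply_of_ne_of_ne h1 h2, Fin.cons_succ, Fin.cons_succ,
            Fin.cons_succ, Fin.cons_succ]

end FinAux
section ConsLemma
set_option linter.unusedSectionVars false
set_option maxHeartbeats 1000000

variable (k : Type*) [Field k]
    (g : Type*) [LieRing g] [LieAlgebra k g]
    (V : Type*) [AddCommGroup V] [Module k V]
    (a : V →ₗ[k] g →ₗ[k] V)

lemma removeNth_mk_succ_cons {n : ℕ} (v : ℕ) (hv : v + 1 < n + 2) (x : g)
    (W : Fin (n + 1) → g) :
    Fin.removeNth (⟨v + 1, hv⟩ : Fin (n + 2)) (Fin.cons x W : Fin (n + 2) → g)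
      = Fin.cons x (Fin.removeNth (⟨v, by omega⟩ : Fin (n + 1)) W) := by
  have h : (⟨v + 1, hv⟩ : Fin (n + 2)) = (⟨v, by omega⟩ : Fin (n + 1)).succ := rfl
  rw [h, removeNth_succ_cons]

lemma dCE_cons (n : ℕ) (δ : (Fin (n + 1) → g) → V) (X : g) (Y : Fin (n + 1) → g) :
    dCE k g V a (n + 1) δ (Fin.cons X Y)
      = (∑ j : Fin (n + 1), ((-1 : ℤ) ^ ((j : ℕ) + 1)) •
            δ (Fin.cons ⁅X, Y j⁆ (Fin.removeNth j Y)))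
        + (∑ i : Fin (n + 1), ∑ j : Fin (n + 1),
            if h : (i : ℕ) < (j : ℕ) then
              ((-1 : ℤ) ^ ((i : ℕ) + (j : ℕ))) •
                δ ((Fin.cons X (Atup g n Y i j h) : Fin (n + 1) → g) ∘ (Equiv.swap 0 1))
            else 0)
        + (- a (δ Y) X)
        + ∑ r : Fin (n + 1), ((-1 : ℤ) ^ (r : ℕ)) •
            a (δ (Fin.cons X (Fin.removeNth r Y))) (Y r) := by
  rw [dCE_eq]
  have hpair : (∑ p : Fin (n + 2), ∑ q : Fin (n + 2),
        if h : (p : ℕ) < (q : ℕ) then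
          ((-1 : ℤ) ^ ((p : ℕ) + (q : ℕ))) •
            δ (Atup g (n + 1) (Fin.cons X Y) p q h)
        else 0)
      = (∑ j : Fin (n + 1), ((-1 : ℤ) ^ ((j : ℕ) + 1)) •
            δ (Fin.cons ⁅X, Y j⁆ (Fin.removeNth j Y)))
        + (∑ i : Fin (n + 1), ∑ j : Fin (n + 1),
            if h : (i : ℕ) < (j : ℕ) then
              ((-1 : ℤ) ^ ((i : ℕ) + (j : ℕ))) •
                δ ((Fin.cons X (Atup g n Y i j h) : Fin (n + 1) → g) ∘ (Equiv.swap 0 1))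
            else 0) := by
    rw [Fin.sum_univ_succ]
    congr 1
    · rw [Fin.sum_univ_succ, dif_neg (lt_irrefl _), zero_add]
      refine Finset.sum_congr rfl fun s _ => ?_
      rw [dif_pos (show ((0 : Fin (n + 2)) : ℕ) < (s.succ : ℕ) from Nat.succ_pos _)]
      congr 1
      · simp
      · rw [Atup_succ, removeNth_succ_cons]
        simp only [Fin.cons_zero, Fin.cons_succ, Fin.val_zero, Fin.mk_zero,
          Fin.removeNth_zero, Fin.tail_cons]
    · refine Finset.sum_congr rfl fun p _ => ?_
      rw [Fin.sum_univ_succ, dif_neg (by simp), zero_add]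
      refine Finset.sum_congr rfl fun s _ => ?_
      by_cases h : (p : ℕ) < (s : ℕ)
      · rw [dif_pos (by simp only [Fin.val_succ]; omega), dif_pos h]
        match n, Y, p, s, h with
        | 0, Y, p, s, h => exact absurd h (by have := s.isLt; omega)
        | (m+1), Y, p, s, h =>
          congr 1
          · rw [Fin.val_succ, Fin.val_succ]
            rw [show (p : ℕ) + 1 + ((s : ℕ) + 1) = (p : ℕ) + (s : ℕ) + 2 by omega,
              pow_add]
            norm_num
          · rw [Atup_succ, Atup_succ, removeNth_succ_cons, cons_cons_swap]
            simp only [Fin.cons_succ, Fin.val_succ]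
            rw [removeNth_mk_succ_cons]
      · rw [dif_neg (by simp only [Fin.val_succ]; omega), dif_neg h]
  have hmod : (∑ j : Fin (n + 2), ((-1 : ℤ) ^ ((j : ℕ) + 1)) •
        a (δ (Fin.removeNth j (Fin.cons X Y : Fin (n + 2) → g)))
          ((Fin.cons X Y : Fin (n + 2) → g) j))
      = (- a (δ Y) X)
        + ∑ r : Fin (n + 1), ((-1 : ℤ) ^ (r : ℕ)) •
            a (δ (Fin.cons X (Fin.removeNth r Y))) (Y r) := by
    rw [Fin.sum_univ_succ]
    congr 1
    · simp only [Fin.val_zero, zero_add, pow_one, Fin.removeNth_zero, Fin.tail_cons,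
        Fin.cons_zero, neg_smul, one_smul]
    · refine Finset.sum_congr rfl fun r _ => ?_
      rw [removeNth_succ_cons]
      simp only [Fin.cons_succ, Fin.val_succ]
      congr 1
      rw [show (r : ℕ) + 1 + 1 = (r : ℕ) + 2 by omega, pow_add]
      norm_num
  rw [hpair, hmod]
  abel

end ConsLemma
section Main
set_option linter.unusedSectionVars false
set_option maxHeartbeats 1600000

variable (k : Type*) [Field k]
    (g : Type*) [LieRing g] [LieAlgebra k g]
    (ι : Type*) [Fintype ι] [DecidableEq ι] (b : Module.Basis ι k g)
    (V : Type*) [AddCommGroup V] [Module k V]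
    (cov : V →ₗ[k] g ⊗[k] V)
    (a : V →ₗ[k] g →ₗ[k] V)

lemma main_identity
    (hUS : ∀ v : V, ∑ i, coactL k g V cov (b.coord i) (a v (b i)) = 0)
    (hKEY : ∀ (w : g →ₗ[k] V) (X : g),
      ∑ i, coactL k g V cov (b.coord i) (a (w (b i)) X)
        = a (∑ i, coactL k g V cov (b.coord i) (w (b i))) X
          + ∑ i, coactL k g V cov (b.coord i) (w ⁅b i, X⁆))
    (n : ℕ) (γ : AlternatingMap k g V (Fin (n + 1))) (Y : Fin (n + 1) → g) :
    dCE k g V a n (dK k g V b cov n ⇑γ) Y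
      + dK k g V b cov (n + 1) (dCE k g V a (n + 1) ⇑γ) Y = 0 := by
  -- abbreviation for the coaction operators
  set cL : ι → V →ₗ[k] V := fun t => coactL k g V cov (b.coord t) with hcL
  -- the A side
  have hA : dCE k g V a n (dK k g V b cov n ⇑γ) Y
      = (∑ i : Fin (n + 1), ∑ j : Fin (n + 1),
          if h : (i : ℕ) < (j : ℕ) then
            ((-1 : ℤ) ^ ((i : ℕ) + (j : ℕ))) •
              (∑ t : ι, cL t (γ (Fin.cons (b t) (Atup g n Y i j h))))
          else 0)
        + ∑ j : Fin (n + 1), ((-1 : ℤ) ^ ((j : ℕ) + 1)) •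
            a (∑ t : ι, cL t (γ (Fin.cons (b t) (Fin.removeNth j Y)))) (Y j) :=
    dCE_eq k g V a n (dK k g V b cov n ⇑γ) Y
  -- the B side, expanded via dCE_cons
  have hBexp : dK k g V b cov (n + 1) (dCE k g V a (n + 1) ⇑γ) Y
      = (∑ t : ι, cL t (∑ j : Fin (n + 1), ((-1 : ℤ) ^ ((j : ℕ) + 1)) •
            γ (Fin.cons ⁅b t, Y j⁆ (Fin.removeNth j Y))))
        + (∑ t : ι, cL t (∑ i : Fin (n + 1), ∑ j : Fin (n + 1),
            if h : (i : ℕ) < (j : ℕ) then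
              ((-1 : ℤ) ^ ((i : ℕ) + (j : ℕ))) •
                γ ((Fin.cons (b t) (Atup g n Y i j h) : Fin (n + 1) → g)
                    ∘ (Equiv.swap 0 1))
            else 0))
        + (∑ t : ι, cL t (- a (γ Y) (b t)))
        + (∑ t : ι, cL t (∑ r : Fin (n + 1), ((-1 : ℤ) ^ (r : ℕ)) •
            a (γ (Fin.cons (b t) (Fin.removeNth r Y))) (Y r))) := by
    calc dK k g V b cov (n + 1) (dCE k g V a (n + 1) ⇑γ) Y
        = ∑ t : ι, cL t (dCE k g V a (n + 1) ⇑γ (Fin.cons (b t) Y)) := rfl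
      _ = ∑ t : ι, (cL t (∑ j : Fin (n + 1), ((-1 : ℤ) ^ ((j : ℕ) + 1)) •
              γ (Fin.cons ⁅b t, Y j⁆ (Fin.removeNth j Y)))
            + cL t (∑ i : Fin (n + 1), ∑ j : Fin (n + 1),
                if h : (i : ℕ) < (j : ℕ) then
                  ((-1 : ℤ) ^ ((i : ℕ) + (j : ℕ))) •
                    γ ((Fin.cons (b t) (Atup g n Y i j h) : Fin (n + 1) → g)
                        ∘ (Equiv.swap 0 1))
                else 0)
            + cL t (- a (γ Y) (b t))
            + cL t (∑ r : Fin (n + 1), ((-1 : ℤ) ^ (r : ℕ)) •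
                a (γ (Fin.cons (b t) (Fin.removeNth r Y))) (Y r))) := by
          refine Finset.sum_congr rfl fun t _ => ?_
          rw [dCE_cons k g V a n ⇑γ (b t) Y, map_add, map_add, map_add]
      _ = _ := by
          rw [Finset.sum_add_distrib, Finset.sum_add_distrib, Finset.sum_add_distrib]
  -- B stability part vanishes
  have hB2 : (∑ t : ι, cL t (- a (γ Y) (b t))) = 0 := by
    rw [Finset.sum_congr rfl fun t (_ : t ∈ Finset.univ) => map_neg (cL t) _,
      Finset.sum_neg_distrib, hUS (γ Y), neg_zero]
  -- B pair part equals minus the A pair part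
  have hB1 : (∑ t : ι, cL t (∑ i : Fin (n + 1), ∑ j : Fin (n + 1),
        if h : (i : ℕ) < (j : ℕ) then
          ((-1 : ℤ) ^ ((i : ℕ) + (j : ℕ))) •
            γ ((Fin.cons (b t) (Atup g n Y i j h) : Fin (n + 1) → g)
                ∘ (Equiv.swap 0 1))
        else 0))
      = - ∑ i : Fin (n + 1), ∑ j : Fin (n + 1),
          if h : (i : ℕ) < (j : ℕ) then
            ((-1 : ℤ) ^ ((i : ℕ) + (j : ℕ))) •
              (∑ t : ι, cL t (γ (Fin.cons (b t) (Atup g n Y i j h))))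
          else 0 := by
    have step : ∀ t : ι, cL t (∑ i : Fin (n + 1), ∑ j : Fin (n + 1),
        if h : (i : ℕ) < (j : ℕ) then
          ((-1 : ℤ) ^ ((i : ℕ) + (j : ℕ))) •
            γ ((Fin.cons (b t) (Atup g n Y i j h) : Fin (n + 1) → g)
                ∘ (Equiv.swap 0 1))
        else 0)
        = ∑ i : Fin (n + 1), ∑ j : Fin (n + 1),
          if h : (i : ℕ) < (j : ℕ) then
            -(((-1 : ℤ) ^ ((i : ℕ) + (j : ℕ))) •
              cL t (γ (Fin.cons (b t) (Atup g n Y i j h))))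
          else 0 := by
      intro t
      rw [map_sum]
      refine Finset.sum_congr rfl fun i _ => ?_
      rw [map_sum]
      refine Finset.sum_congr rfl fun j _ => ?_
      by_cases h : (i : ℕ) < (j : ℕ)
      · rw [dif_pos h, dif_pos h]
        have hne : (0 : Fin (n + 1)) ≠ 1 := by
          have h1 := j.isLt
          obtain ⟨m, rfl⟩ : ∃ m, n = m + 1 := ⟨n - 1, by omega⟩
          exact Fin.zero_ne_one
        rw [γ.map_swap _ hne, map_zsmul, map_neg, smul_neg]
      · rw [dif_neg h, dif_neg h, map_zero]
    rw [Finset.sum_congr rfl fun t _ => step t, Finset.sum_comm]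
    rw [← Finset.sum_neg_distrib]
    refine Finset.sum_congr rfl fun i _ => ?_
    rw [Finset.sum_comm, ← Finset.sum_neg_distrib]
    refine Finset.sum_congr rfl fun j _ => ?_
    by_cases h : (i : ℕ) < (j : ℕ)
    · rw [dif_pos h]
      rw [Finset.sum_congr rfl fun t (_ : t ∈ Finset.univ) => dif_pos h]
      rw [Finset.sum_neg_distrib, ← Finset.smul_sum]
    · rw [dif_neg h, Finset.sum_congr rfl fun t (_ : t ∈ Finset.univ) => dif_neg h,
        Finset.sum_const_zero, neg_zero]
  -- B bracket part: swap the sums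
  have hB0 : (∑ t : ι, cL t (∑ j : Fin (n + 1), ((-1 : ℤ) ^ ((j : ℕ) + 1)) •
        γ (Fin.cons ⁅b t, Y j⁆ (Fin.removeNth j Y))))
      = ∑ j : Fin (n + 1), ((-1 : ℤ) ^ ((j : ℕ) + 1)) •
          ∑ t : ι, cL t (γ (Fin.cons ⁅b t, Y j⁆ (Fin.removeNth j Y))) := by
    have push : ∀ t : ι, cL t (∑ j : Fin (n + 1), ((-1 : ℤ) ^ ((j : ℕ) + 1)) •
        γ (Fin.cons ⁅b t, Y j⁆ (Fin.removeNth j Y)))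
        = ∑ j : Fin (n + 1), ((-1 : ℤ) ^ ((j : ℕ) + 1)) •
            cL t (γ (Fin.cons ⁅b t, Y j⁆ (Fin.removeNth j Y))) := by
      intro t
      rw [map_sum]
      exact Finset.sum_congr rfl fun j _ => map_zsmul (cL t) _ _
    rw [Finset.sum_congr rfl fun t (_ : t ∈ Finset.univ) => push t, Finset.sum_comm]
    exact Finset.sum_congr rfl fun j _ => (Finset.smul_sum).symm
  -- B module part: swap the sums
  have hBm : (∑ t : ι, cL t (∑ r : Fin (n + 1), ((-1 : ℤ) ^ (r : ℕ)) •
        a (γ (Fin.cons (b t) (Fin.removeNth r Y))) (Y r)))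
      = ∑ r : Fin (n + 1), ((-1 : ℤ) ^ (r : ℕ)) •
          ∑ t : ι, cL t (a (γ (Fin.cons (b t) (Fin.removeNth r Y))) (Y r)) := by
    have push : ∀ t : ι, cL t (∑ r : Fin (n + 1), ((-1 : ℤ) ^ (r : ℕ)) •
        a (γ (Fin.cons (b t) (Fin.removeNth r Y))) (Y r))
        = ∑ r : Fin (n + 1), ((-1 : ℤ) ^ (r : ℕ)) •
            cL t (a (γ (Fin.cons (b t) (Fin.removeNth r Y))) (Y r)) := by
      intro t
      rw [map_sum]
      exact Finset.sum_congr rfl fun r _ => map_zsmul (cL t) _ _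
    rw [Finset.sum_congr rfl fun t (_ : t ∈ Finset.univ) => push t, Finset.sum_comm]
    exact Finset.sum_congr rfl fun r _ => (Finset.smul_sum).symm
  -- the module parts cancel by the KEY identity
  have hM : (∑ j : Fin (n + 1), ((-1 : ℤ) ^ ((j : ℕ) + 1)) •
        a (∑ t : ι, cL t (γ (Fin.cons (b t) (Fin.removeNth j Y)))) (Y j))
      + (∑ j : Fin (n + 1), ((-1 : ℤ) ^ ((j : ℕ) + 1)) •
          ∑ t : ι, cL t (γ (Fin.cons ⁅b t, Y j⁆ (Fin.removeNth j Y))))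
      + (∑ j : Fin (n + 1), ((-1 : ℤ) ^ (j : ℕ)) •
          ∑ t : ι, cL t (a (γ (Fin.cons (b t) (Fin.removeNth j Y))) (Y j))) = 0 := by
    rw [← Finset.sum_add_distrib, ← Finset.sum_add_distrib]
    refine Finset.sum_eq_zero fun j _ => ?_
    set w : g →ₗ[k] V :=
      γ.toMultilinearMap.toLinearMap (Fin.cons 0 (Fin.removeNth j Y)) 0 with hwdef
    have hwz : ∀ z : g, w z = γ (Fin.cons z (Fin.removeNth j Y)) := by
      intro z
      show γ.toMultilinearMap (Function.update (Fin.cons 0 (Fin.removeNth j Y)) 0 z) = _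
      rw [Fin.update_cons_zero]
      rfl
    have e1 : (∑ t : ι, cL t (γ (Fin.cons (b t) (Fin.removeNth j Y))))
        = ∑ t : ι, cL t (w (b t)) :=
      Finset.sum_congr rfl fun t _ => by rw [hwz]
    have e2 : (∑ t : ι, cL t (γ (Fin.cons ⁅b t, Y j⁆ (Fin.removeNth j Y))))
        = ∑ t : ι, cL t (w ⁅b t, Y j⁆) :=
      Finset.sum_congr rfl fun t _ => by rw [hwz]
    have e3 : (∑ t : ι, cL t (a (γ (Fin.cons (b t) (Fin.removeNth j Y))) (Y j)))
        = ∑ t : ι, cL t (a (w (b t)) (Y j)) :=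
      Finset.sum_congr rfl fun t _ => by rw [hwz]
    rw [e1, e2, e3, hKEY w (Y j), pow_succ, mul_neg_one, neg_smul, neg_smul, smul_add]
    abel
  rw [hA, hBexp, hB0, hB1, hB2, hBm]
  have final : ∀ P M T0 Tm : V, M + T0 + Tm = 0
      → P + M + (T0 + -P + 0 + Tm) = 0 := by
    intro P M T0 Tm hh
    have : P + M + (T0 + -P + 0 + Tm) = M + T0 + Tm := by abel
    rw [this, hh]
  exact final _ _ _ _ hM

end Main
section Extract
set_option linter.unusedSectionVars false
set_option maxHeartbeats 1600000

variable (k : Type*) [Field k]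
    (g : Type*) [LieRing g] [LieAlgebra k g]
    (ι : Type*) [Fintype ι] [DecidableEq ι] (b : Module.Basis ι k g)
    (V : Type*) [AddCommGroup V] [Module k V]
    (cov : V →ₗ[k] g ⊗[k] V)
    (a : V →ₗ[k] g →ₗ[k] V)

lemma dCE_zero_eval (δ : (Fin 0 → g) → V) (Z : Fin 1 → g) :
    dCE k g V a 0 δ Z = - a (δ (Fin.removeNth 0 Z)) (Z 0) := by
  rw [dCE_eq, Fin.sum_univ_one, Fin.sum_univ_one, dif_neg (lt_irrefl _),
    Fin.sum_univ_one]
  simp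

lemma dK_dCE_zero (γ : (Fin 0 → g) → V) (Y : Fin 0 → g) :
    dK k g V b cov 0 (dCE k g V a 0 γ) Y
      = - ∑ t : ι, coactL k g V cov (b.coord t) (a (γ Y) (b t)) := by
  calc dK k g V b cov 0 (dCE k g V a 0 γ) Y
      = ∑ t : ι, coactL k g V cov (b.coord t)
          (dCE k g V a 0 γ (Fin.cons (b t) Y)) := rfl
    _ = ∑ t : ι, coactL k g V cov (b.coord t) (- a (γ Y) (b t)) := by
        refine Finset.sum_congr rfl fun t _ => ?_
        rw [dCE_zero_eval, Fin.removeNth_zero, Fin.tail_cons, Fin.cons_zero]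
    _ = _ := by
        rw [Finset.sum_congr rfl fun t (_ : t ∈ Finset.univ) =>
          map_neg (coactL k g V cov (b.coord t)) _, Finset.sum_neg_distrib]

lemma key_extract
    (hUS : ∀ v : V, ∑ i, coactL k g V cov (b.coord i) (a v (b i)) = 0)
    (H0 : ∀ (γ : AlternatingMap k g V (Fin 1)) (Y : Fin 1 → g),
      dCE k g V a 0 (dK k g V b cov 0 ⇑γ) Y
        + dK k g V b cov 1 (dCE k g V a 1 ⇑γ) Y = 0)
    (w : g →ₗ[k] V) (X : g) :
    ∑ i, coactL k g V cov (b.coord i) (a (w (b i)) X)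
      = a (∑ i, coactL k g V cov (b.coord i) (w (b i))) X
        + ∑ i, coactL k g V cov (b.coord i) (w ⁅b i, X⁆) := by
  set γ : AlternatingMap k g V (Fin 1) :=
    (AlternatingMap.ofSubsingleton k g V (0 : Fin 1)) w with hγ
  have hγap : ∀ v : Fin 1 → g, γ v = w (v 0) := fun v => rfl
  have h := H0 γ (fun _ => X)
  have hA : dCE k g V a 0 (dK k g V b cov 0 ⇑γ) (fun _ => X)
      = - a (∑ t : ι, coactL k g V cov (b.coord t) (w (b t))) X := by
    rw [dCE_zero_eval]
    congr 1
  have hB : dK k g V b cov 1 (dCE k g V a 1 ⇑γ) (fun _ => X)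
      = (- ∑ t : ι, coactL k g V cov (b.coord t) (w ⁅b t, X⁆))
        + (- ∑ t : ι, coactL k g V cov (b.coord t) (a (w X) (b t)))
        + ∑ t : ι, coactL k g V cov (b.coord t) (a (w (b t)) X) := by
    calc dK k g V b cov 1 (dCE k g V a 1 ⇑γ) (fun _ => X)
        = ∑ t : ι, coactL k g V cov (b.coord t)
            (dCE k g V a 1 ⇑γ (Fin.cons (b t) (fun _ => X))) := rfl
      _ = ∑ t : ι, ((- coactL k g V cov (b.coord t) (w ⁅b t, X⁆))
            + (- coactL k g V cov (b.coord t) (a (w X) (b t)))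
            + coactL k g V cov (b.coord t) (a (w (b t)) X)) := by
          refine Finset.sum_congr rfl fun t _ => ?_
          rw [dCE_cons k g V a 0 ⇑γ (b t) (fun _ => X)]
          rw [Fin.sum_univ_one, Fin.sum_univ_one, Fin.sum_univ_one,
            dif_neg (lt_irrefl _), Fin.sum_univ_one]
          simp only [hγap, Fin.cons_zero, Fin.val_zero, pow_zero, pow_one, zero_add,
            one_smul, neg_smul, add_zero]
          rw [map_add, map_add, map_neg, map_neg]
      _ = _ := by
          rw [Finset.sum_add_distrib, Finset.sum_add_distrib,
            Finset.sum_neg_distrib, Finset.sum_neg_distrib]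
  rw [hA, hB, hUS (w X), neg_zero, add_zero] at h
  rw [← sub_eq_zero]
  calc (∑ i, coactL k g V cov (b.coord i) (a (w (b i)) X))
        - (a (∑ i, coactL k g V cov (b.coord i) (w (b i))) X
          + ∑ i, coactL k g V cov (b.coord i) (w ⁅b i, X⁆))
      = - a (∑ t : ι, coactL k g V cov (b.coord t) (w (b t))) X
        + (- ∑ t : ι, coactL k g V cov (b.coord t) (w ⁅b t, X⁆)
          + ∑ t : ι, coactL k g V cov (b.coord t) (a (w (b t)) X)) := by abel
    _ = 0 := h

end Extract
/-- For a finite-dimensional Lie algebra `g` with basis `{X_i}`, dual basis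
`{f^i}`, and `V` a right `g`-module and left `g`-comodule, the identity
`d_CE ∘ d_K + d_K ∘ d_CE = 0` holds on alternating cochains `W^n(g,V)` in every degree
`n ≥ 0` (in degree `0` the Koszul boundary out of `W^0` is zero, so the identity reads
`d_K ∘ d_CE = 0` there) if and only if `V` is a unimodular stable anti-Yetter–Drinfeld
module over `g`, i.e. (i) `Σ_i (v·X_i)·f^i = 0` for all `v` (unimodular stability) and
(ii) `cov(v·X) = v₍₋₁₎ ⊗ (v₍₀₎·X) + [v₍₋₁₎, X] ⊗ v₍₀₎` for all `v, X` (the AYD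
condition). -/
theorem statement3 (k : Type*) [Field k]
    (g : Type*) [LieRing g] [LieAlgebra k g]
    (ι : Type*) [Fintype ι] [DecidableEq ι] (b : Module.Basis ι k g)
    (V : Type*) [AddCommGroup V] [Module k V]
    (cov : V →ₗ[k] g ⊗[k] V)
    (hcomod : ∀ v : V,
      flip12 k g V ((LinearMap.lTensor g cov) (cov v)) = (LinearMap.lTensor g cov) (cov v))
    (a : V →ₗ[k] g →ₗ[k] V)
    (ha : ∀ (v : V) (X Y : g), a v ⁅X, Y⁆ = a (a v X) Y - a (a v Y) X) :
    ((∀ (n : ℕ) (γ : AlternatingMap k g V (Fin (n + 1))) (Y : Fin (n + 1) → g),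
        dCE k g V a n (dK k g V b cov n ⇑γ) Y
          + dK k g V b cov (n + 1) (dCE k g V a (n + 1) ⇑γ) Y = 0) ∧
      (∀ (γ : AlternatingMap k g V (Fin 0)) (Y : Fin 0 → g),
        dK k g V b cov 0 (dCE k g V a 0 ⇑γ) Y = 0))
    ↔
    ((∀ v : V, ∑ i : ι, coactL k g V cov (b.coord i) (a v (b i)) = 0) ∧
      (∀ (v : V) (X : g),
        cov (a v X) =
          (LinearMap.lTensor g (a.flip X)) (cov v)
            + (LinearMap.rTensor V (-(LieAlgebra.ad k g X))) (cov v))) := by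
  constructor
  · rintro ⟨H1, H2⟩
    have hUS : ∀ v : V, ∑ i, coactL k g V cov (b.coord i) (a v (b i)) = 0 := by
      intro v
      have h := H2 (AlternatingMap.constOfIsEmpty k g (Fin 0) v) (fun p => p.elim0)
      rw [dK_dCE_zero k g ι b V cov a] at h
      simp only [AlternatingMap.constOfIsEmpty_apply, Function.const_apply,
        neg_eq_zero] at h
      exact h
    exact ⟨hUS, fun v X => AYD_of_KEY k g ι b V cov a
      (key_extract k g ι b V cov a hUS (H1 0)) v X⟩
  · rintro ⟨hUS, hAYD⟩
    constructor
    · intro n γ Y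
      exact main_identity k g ι b V cov a hUS
        (KEY_of_AYD k g ι b V cov a hAYD) n γ Y
    · intro γ Y
      rw [dK_dCE_zero k g ι b V cov a, hUS (γ Y), neg_zero]
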